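/- Define for each vertex v of a finite graph G = (V,E) hidden variables z_v ∈ {±1} (arbitrary), x_v = ∏_{(u,v)∈E} z_u, and y_v = x_v z_v. Then for every stabilizer element S = χ ⊗_v σ_v of the graph state of G with sign χ = +1, the product ∏_{v: σ_v ≠ I} h(v, σ_v) equals +1, where h(v, Z) = z_v, h(v, X) = x_v, h(v, Y) = y_v. In particular this LHV model correctly predicts the outcome of every stabilizer measurement except those with sign χ = −1. -/

import Mathlib

open scoped Classical

inductive Pauli | I | X | Y | Z
deriving DecidableEq

noncomputable def pauliMat : Pauli → Matrix (Fin 2) (Fin 2) ℂ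
  | Pauli.I => 1
  | Pauli.X => !![0, 1; 1, 0]
  | Pauli.Y => !![0, -Complex.I; Complex.I, 0]
  | Pauli.Z => !![1, 0; 0, -1]

noncomputable def pauliProd {V : Type} [Fintype V] [DecidableEq V] (σ : V → Pauli) :
    Matrix (V → Fin 2) (V → Fin 2) ℂ :=
  fun f g => ∏ v, pauliMat (σ v) (f v) (g v)

noncomputable def graphGen {V : Type} [Fintype V] [DecidableEq V] (G : SimpleGraph V) (v : V) :
    Matrix (V → Fin 2) (V → Fin 2) ℂ :=
  pauliProd (fun u => if u = v then Pauli.X else if G.Adj u v then Pauli.Z else Pauli.I)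

noncomputable def graphState {V : Type} [Fintype V] [DecidableEq V] (G : SimpleGraph V) :
    (V → Fin 2) → ℂ :=
  fun f => (-1 : ℂ) ^ (∑ e ∈ G.edgeFinset,
      Sym2.lift ⟨fun u v => (f u : ℕ) * (f v : ℕ), fun u v => Nat.mul_comm _ _⟩ e) /
    (Real.sqrt (2 ^ Fintype.card V) : ℂ)

noncomputable def expVal {V : Type} [Fintype V] [DecidableEq V]
    (ψ : (V → Fin 2) → ℂ) (P : Matrix (V → Fin 2) (V → Fin 2) ℂ) : ℂ :=
  ∑ f, ∑ g, (starRingEnd ℂ) (ψ f) * P f g * ψ g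

def xb : Pauli → Fin 2
  | Pauli.X => 1
  | Pauli.Y => 1
  | _ => 0

def zb : Pauli → Fin 2
  | Pauli.Z => 1
  | Pauli.Y => 1
  | _ => 0

noncomputable def ent (a b f g : Fin 2) : ℂ :=
  if f = g + a then (-1 : ℂ) ^ ((b * g : Fin 2) : ℕ) else 0

noncomputable def bigM {V : Type} [Fintype V] (c : ℂ) (a b : V → Fin 2) :
    Matrix (V → Fin 2) (V → Fin 2) ℂ :=
  fun f g => c * ∏ v, ent (a v) (b v) (f v) (g v)

lemma pauli_ent (p : Pauli) (f g : Fin 2) :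
    pauliMat p f g = Complex.I ^ ((xb p * zb p : Fin 2) : ℕ) * ent (xb p) (zb p) f g := by
  cases p <;> fin_cases f <;> fin_cases g <;>
    simp [pauliMat, ent, xb, zb, Matrix.one_apply] <;> norm_num <;> decide

lemma pauliProd_eq {V : Type} [Fintype V] [DecidableEq V] (σ : V → Pauli) :
    pauliProd σ = bigM (∏ v, Complex.I ^ ((xb (σ v) * zb (σ v) : Fin 2) : ℕ))
      (fun v => xb (σ v)) (fun v => zb (σ v)) := by
  funext f g
  simp only [pauliProd, bigM, ← Finset.prod_mul_distrib]
  exact Finset.prod_congr rfl fun v _ => pauli_ent _ _ _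

lemma ent_mul_sum (a b a' b' f g : Fin 2) :
    ∑ h : Fin 2, ent a b f h * ent a' b' h g
      = (-1 : ℂ) ^ ((b * a' : Fin 2) : ℕ) * ent (a + a') (b + b') f g := by
  fin_cases a <;> fin_cases b <;> fin_cases a' <;> fin_cases b' <;> fin_cases f <;> fin_cases g <;>
    simp [ent, Fin.sum_univ_two] <;> norm_num

lemma bigM_mul {V : Type} [Fintype V] [DecidableEq V] (c c' : ℂ) (a b a' b' : V → Fin 2) :
    bigM c a b * bigM c' a' b'
      = bigM (c * c' * ∏ v, (-1 : ℂ) ^ ((b v * a' v : Fin 2) : ℕ)) (a + a') (b + b') := by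
  funext f g
  simp only [Matrix.mul_apply, bigM]
  have h1 : ∀ h : V → Fin 2,
      (c * ∏ v, ent (a v) (b v) (f v) (h v)) * (c' * ∏ v, ent (a' v) (b' v) (h v) (g v))
        = (c * c') * ∏ v, (ent (a v) (b v) (f v) (h v) * ent (a' v) (b' v) (h v) (g v)) := by
    intro h; rw [Finset.prod_mul_distrib]; ring
  rw [Finset.sum_congr rfl fun h _ => h1 h, ← Finset.mul_sum,
    ← Fintype.prod_sum fun v j => ent (a v) (b v) (f v) j * ent (a' v) (b' v) j (g v)]
  rw [Finset.prod_congr rfl fun v _ => ent_mul_sum (a v) (b v) (a' v) (b' v) (f v) (g v),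
    Finset.prod_mul_distrib]
  simp only [Pi.add_apply]
  ring

lemma bigM_inj {V : Type} [Fintype V] [DecidableEq V] {c c' : ℂ} {a b a' b' : V → Fin 2}
    (hc' : c' ≠ 0) (h : bigM c a b = bigM c' a' b') : c = c' ∧ a = a' ∧ b = b' := by
  have hent : ∀ (x y w : Fin 2), ent x y (w + x) w = (-1 : ℂ) ^ ((y * w : Fin 2) : ℕ) := by
    intro x y w; simp [ent]
  have key : ∀ (g0 : V → Fin 2),
      bigM c' a' b' (fun v => g0 v + a' v) g0 = c' * ∏ v, (-1 : ℂ) ^ ((b' v * g0 v : Fin 2) : ℕ) := by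
    intro g0
    simp only [bigM]
    congr 1
    exact Finset.prod_congr rfl fun v _ => hent _ _ _
  -- first: a = a'
  have ha : a = a' := by
    have h0 := congrFun (congrFun h (fun v => a' v)) (fun _ => 0)
    have hr : bigM c' a' b' (fun v => a' v) (fun _ => 0) = c' := by
      have := key (fun _ => 0)
      simpa using this
    rw [hr] at h0
    have hne : (c * ∏ v, ent (a v) (b v) (a' v) 0) ≠ 0 := by
      rw [show (c * ∏ v, ent (a v) (b v) (a' v) 0) = bigM c a b (fun v => a' v) (fun _ => 0) from rfl,
        h0]
      exact hc'
    have hprod : (∏ v, ent (a v) (b v) (a' v) 0) ≠ 0 := by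
      intro hzero
      exact hne (by simp [bigM, hzero])
    funext v
    have hv : ent (a v) (b v) (a' v) 0 ≠ 0 :=
      Finset.prod_ne_zero_iff.mp hprod v (Finset.mem_univ v)
    by_contra hne2
    apply hv
    simp only [ent]
    rw [if_neg]
    simpa [eq_comm] using hne2
  subst ha
  have key2 : ∀ (cc : ℂ) (bb : V → Fin 2) (g0 : V → Fin 2),
      bigM cc a bb (fun v => g0 v + a v) g0 = cc * ∏ v, (-1 : ℂ) ^ ((bb v * g0 v : Fin 2) : ℕ) := by
    intro cc bb g0
    simp only [bigM]
    congr 1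
    exact Finset.prod_congr rfl fun v _ => hent _ _ _
  have hc : c = c' := by
    have h0 := congrFun (congrFun h (fun v => (0 : Fin 2) + a v)) (fun _ => 0)
    rw [key2 c b (fun _ => 0), key2 c' b' (fun _ => 0)] at h0
    simpa using h0
  refine ⟨hc, rfl, ?_⟩
  funext v
  have hg0 : ∃ g0 : V → Fin 2, g0 = Pi.single v 1 := ⟨_, rfl⟩
  obtain ⟨g0, hg0⟩ := hg0
  have h0 := congrFun (congrFun h (fun u => g0 u + a u)) g0
  rw [key2 c b g0, key2 c' b' g0, ← hc] at h0
  have hps : ∀ (bb : V → Fin 2),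
      (∏ u, (-1 : ℂ) ^ ((bb u * g0 u : Fin 2) : ℕ)) = (-1 : ℂ) ^ ((bb v : Fin 2) : ℕ) := by
    intro bb
    rw [Finset.prod_eq_single v]
    · rw [hg0]; simp
    · intro u _ hu; rw [hg0]; simp [Pi.single_eq_of_ne hu]
    · simp
  rw [hps b, hps b'] at h0
  have h1 : ((-1 : ℂ)) ^ ((b v : Fin 2) : ℕ) = (-1 : ℂ) ^ ((b' v : Fin 2) : ℕ) :=
    mul_left_cancel₀ (hc ▸ hc') h0
  have hb2 : ∀ x : Fin 2, x = 0 ∨ x = 1 := by decide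
  rcases hb2 (b v) with hb | hb <;> rcases hb2 (b' v) with hb' | hb' <;>
    rw [hb, hb'] <;> rw [hb, hb'] at h1 <;> first | rfl | (norm_num at h1)

lemma graphGen_eq {V : Type} [Fintype V] [DecidableEq V] (G : SimpleGraph V) (v : V) :
    graphGen G v = bigM 1 (fun u => if u = v then 1 else 0)
      (fun u => if G.Adj u v then 1 else 0) := by
  rw [graphGen, pauliProd_eq]
  have h1 : (∏ u : V, Complex.I ^
      ((xb (if u = v then Pauli.X else if G.Adj u v then Pauli.Z else Pauli.I) *
        zb (if u = v then Pauli.X else if G.Adj u v then Pauli.Z else Pauli.I) : Fin 2) : ℕ)) = 1 := by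
    apply Finset.prod_eq_one
    intro u _
    by_cases h : u = v <;> by_cases h2 : G.Adj u v <;> simp [h, h2, xb, zb]
  rw [h1]
  have hA : (fun u => xb (if u = v then Pauli.X else if G.Adj u v then Pauli.Z else Pauli.I))
      = fun u => if u = v then (1 : Fin 2) else 0 := by
    funext u
    by_cases h : u = v <;> by_cases h2 : G.Adj u v <;> simp [h, h2, xb]
  have hB : (fun u => zb (if u = v then Pauli.X else if G.Adj u v then Pauli.Z else Pauli.I))
      = fun u => if G.Adj u v then (1 : Fin 2) else 0 := by
    funext u
    by_cases h : u = v
    · subst h; simp [zb, SimpleGraph.irrefl]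
    · by_cases h2 : G.Adj u v <;> simp [h, h2, zb]
  rw [hA, hB]

lemma one_eq_bigM {V : Type} [Fintype V] [DecidableEq V] :
    (1 : Matrix (V → Fin 2) (V → Fin 2) ℂ) = bigM 1 0 0 := by
  funext f g
  simp only [bigM, Matrix.one_apply, Pi.zero_apply, one_mul]
  by_cases h : f = g
  · subst h; simp [ent]
  · rw [if_neg h]
    obtain ⟨v, hv⟩ : ∃ v, f v ≠ g v := by
      by_contra hc; push_neg at hc; exact h (funext hc)
    refine (Finset.prod_eq_zero (Finset.mem_univ v) ?_).symm
    simp [ent, hv]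

lemma closure_form {V : Type} [Fintype V] [DecidableEq V] (G : SimpleGraph V)
    {M : Matrix (V → Fin 2) (V → Fin 2) ℂ}
    (hM : M ∈ Submonoid.closure (Set.range (graphGen G))) :
    ∃ (c : ℂ) (a : V → Fin 2), c ≠ 0 ∧
      M = bigM c a (fun u => ∑ w ∈ G.neighborFinset u, a w) := by
  induction hM using Submonoid.closure_induction with
  | mem x hx =>
    obtain ⟨v, rfl⟩ := hx
    refine ⟨1, fun u => if u = v then 1 else 0, one_ne_zero, ?_⟩
    rw [graphGen_eq]
    have hB : (fun u => if G.Adj u v then (1 : Fin 2) else 0)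
        = fun u => ∑ w ∈ G.neighborFinset u, if w = v then (1 : Fin 2) else 0 := by
      funext u
      rw [Finset.sum_ite_eq' (G.neighborFinset u) v (fun _ => (1 : Fin 2))]
      simp [SimpleGraph.mem_neighborFinset, SimpleGraph.adj_comm]
    rw [hB]
  | one =>
    exact ⟨1, 0, one_ne_zero, by simpa [Pi.zero_def] using (one_eq_bigM (V := V))⟩
  | mul x y hx hy ihx ihy =>
    obtain ⟨c1, a1, hc1, rfl⟩ := ihx
    obtain ⟨c2, a2, hc2, rfl⟩ := ihy
    refine ⟨c1 * c2 * ∏ v, (-1 : ℂ) ^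
      (((∑ w ∈ G.neighborFinset v, a1 w) * a2 v : Fin 2) : ℕ), a1 + a2, ?_, ?_⟩
    · refine mul_ne_zero (mul_ne_zero hc1 hc2) ?_
      rw [Finset.prod_ne_zero_iff]
      intro v _
      exact pow_ne_zero _ (by norm_num)
    · rw [bigM_mul]
      have hb : ((fun u => ∑ w ∈ G.neighborFinset u, a1 w)
            + fun u => ∑ w ∈ G.neighborFinset u, a2 w)
          = fun u => ∑ w ∈ G.neighborFinset u, (a1 + a2) w := by
        funext u; simp [Finset.sum_add_distrib]
      rw [hb]

lemma neg_one_pow_fin : ∀ x y : Fin 2,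
    ((-1 : ℤ)) ^ (x : ℕ) * (-1) ^ (y : ℕ) = (-1) ^ (((x + y) : Fin 2) : ℕ) := by decide

lemma pow_val_sum {α : Type} (t : ℤ) (ht : t = 1 ∨ t = -1) (s : Finset α) (e : α → Fin 2) :
    t ^ (∑ i ∈ s, ((e i : Fin 2) : ℕ)) = t ^ (((∑ i ∈ s, e i : Fin 2)) : ℕ) := by
  classical
  induction s using Finset.induction with
  | empty => simp
  | @insert a s ha ih =>
    rw [Finset.sum_insert ha, Finset.sum_insert ha, pow_add, ih]
    rcases ht with h1 | h1 <;> subst h1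
    · simp
    · exact neg_one_pow_fin (e a) (∑ i ∈ s, e i)

/-- The Barrett et al. LHV model: choosing `z v = ±1` freely, setting
`x v = ∏_{u ∼ v} z u` and `y v = x v * z v`, correctly predicts outcome `+1` for
every stabilizer element of the graph state with sign `χ = +1`. -/
theorem stmt15 {V : Type} [Fintype V] [DecidableEq V] (G : SimpleGraph V)
    (z : V → ℤ) (hz : ∀ v, z v = 1 ∨ z v = -1)
    (σ : V → Pauli)
    (hstab : pauliProd σ ∈ Submonoid.closure (Set.range (graphGen G))) :
    (∏ v ∈ Finset.univ.filter (fun v => σ v ≠ Pauli.I),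
      (match σ v with
        | Pauli.I => 1
        | Pauli.Z => z v
        | Pauli.X => ∏ u ∈ G.neighborFinset v, z u
        | Pauli.Y => (∏ u ∈ G.neighborFinset v, z u) * z v)) = 1 := by
  obtain ⟨c, a, hc, hM⟩ := closure_form G hstab
  rw [pauliProd_eq] at hM
  obtain ⟨hcc, ha, hb⟩ := bigM_inj hc hM
  have hzb : ∀ v, zb (σ v) = ∑ w ∈ G.neighborFinset v, xb (σ w) := by
    intro v
    have := congrFun hb v
    rw [this]
    exact Finset.sum_congr rfl fun w _ => (congrFun ha w).symm ▸ rfl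
  rw [Finset.prod_filter]
  have hterm : ∀ v, (if σ v ≠ Pauli.I then
      (match σ v with
        | Pauli.I => 1
        | Pauli.Z => z v
        | Pauli.X => ∏ u ∈ G.neighborFinset v, z u
        | Pauli.Y => (∏ u ∈ G.neighborFinset v, z u) * z v) else 1)
      = (∏ u ∈ G.neighborFinset v, z u) ^ ((xb (σ v) : Fin 2) : ℕ)
        * z v ^ ((zb (σ v) : Fin 2) : ℕ) := by
    intro v
    cases h : σ v <;> simp [h, xb, zb]
  rw [Finset.prod_congr rfl fun v _ => hterm v, Finset.prod_mul_distrib]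
  have h5 : ∀ v : V, (∏ u ∈ G.neighborFinset v, z u) ^ ((xb (σ v) : Fin 2) : ℕ)
      = ∏ u ∈ G.neighborFinset v, z u ^ ((xb (σ v) : Fin 2) : ℕ) :=
    fun v => (Finset.prod_pow _ _ _).symm
  rw [Finset.prod_congr rfl fun v _ => h5 v]
  have h6 : (∏ v : V, ∏ u ∈ G.neighborFinset v, z u ^ ((xb (σ v) : Fin 2) : ℕ))
      = ∏ u : V, ∏ v ∈ G.neighborFinset u, z u ^ ((xb (σ v) : Fin 2) : ℕ) := by
    apply Finset.prod_comm'
    intro v u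
    simp [SimpleGraph.mem_neighborFinset, SimpleGraph.adj_comm]
  rw [h6]
  have h7 : ∀ u : V, (∏ v ∈ G.neighborFinset u, z u ^ ((xb (σ v) : Fin 2) : ℕ))
      = z u ^ ((zb (σ u) : Fin 2) : ℕ) := by
    intro u
    rw [Finset.prod_pow_eq_pow_sum, pow_val_sum (z u) (hz u), ← hzb u]
  rw [Finset.prod_congr rfl fun u _ => h7 u, ← Finset.prod_mul_distrib]
  apply Finset.prod_eq_one
  intro u _
  rw [← pow_add, ← two_mul, pow_mul]
  rcases hz u with h | h <;> rw [h] <;> norm_num
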